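/- arXiv:2106.14671 — 2 statements merged into one kernel-verified Lean document; each statement's English description precedes it below -/
import Mathlib

section
/- Under the randomized antenna/sub-carrier selection model, the absolute value of the expected ambiguity function satisfies |E{χ(δf_r, δf_v, δf_θ)}| = (K/(MP)) · |sin(Mπδf_r)/sin(πδf_r)| · |sin(Nπδf_v)/sin(πδf_v)| · |sin(PQ_rπδf_θ)/sin(πδf_θ)|, for δf_r, δf_v, δf_θ real numbers that are not integers. -/
open Finset

/-- The FRaC ambiguity function for a given realization `sel` of the random
antenna/sub-carrier selections (one independent selection per pulse). -/
noncomputable def chi (N K M P Qr : ℕ)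
    (sel : Fin N → (Fin K ↪ Fin M) × (Fin K ↪ Fin P))
    (fr fv fθ : ℝ) : ℂ :=
  ∑ n : Fin N, ∑ k : Fin K, ∑ q : Fin Qr,
    Complex.exp (-Complex.I * (2 * Real.pi *
      ((((sel n).1 k : ℕ) : ℝ) * fr + (n : ℝ) * fv +
        ((Qr : ℝ) * (((sel n).2 k : ℕ) : ℝ) + (q : ℝ)) * fθ)))

lemma abs_exp_I_sub_one (θ : ℝ) :
    ‖Complex.exp ((θ : ℂ) * Complex.I) - 1‖ = 2 * |Real.sin (θ / 2)| := by
  have h : Complex.exp ((θ:ℂ) * Complex.I) - 1 =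
      Complex.ofReal (Real.cos θ - 1) + Complex.ofReal (Real.sin θ) * Complex.I := by
    rw [Complex.exp_mul_I, ← Complex.ofReal_cos, ← Complex.ofReal_sin]
    push_cast
    ring
  rw [h, Complex.norm_def, Complex.normSq_add_mul_I]
  have h1 : Real.sin (θ/2) ^ 2 = 1/2 - Real.cos θ / 2 := by
    have := Real.sin_sq_eq_half_sub (θ/2)
    rwa [mul_div_cancel₀ θ (two_ne_zero)] at this
  have h2 := Real.sin_sq_add_cos_sq θ
  have key : (Real.cos θ - 1)^2 + (Real.sin θ)^2 = (2 * |Real.sin (θ/2)|)^2 := by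
    rw [mul_pow, sq_abs]
    nlinarith
  rw [key, Real.sqrt_sq (by positivity)]

lemma geo_abs (M : ℕ) (x : ℝ) (hx : ∀ n : ℤ, x ≠ n) :
    ‖∑ m : Fin M, Complex.exp (-Complex.I * (2 * Real.pi * ((m : ℝ) * x)))‖ =
      |Real.sin (M * Real.pi * x) / Real.sin (Real.pi * x)| := by
  set z : ℂ := Complex.exp ((-(2 * Real.pi * x) : ℝ) * Complex.I) with hz
  have hterm : ∀ m : ℕ, Complex.exp (-Complex.I * (2 * Real.pi * ((m : ℝ) * x))) = z ^ m := by
    intro m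
    rw [hz, ← Complex.exp_nat_mul]
    congr 1
    push_cast
    ring
  have hz1 : z ≠ 1 := by
    intro h
    rw [hz, Complex.exp_eq_one_iff] at h
    obtain ⟨n, hn⟩ := h
    have hI : ((-(2 * Real.pi * x) : ℝ) : ℂ) = (n : ℂ) * (2 * Real.pi) :=
      mul_right_cancel₀ Complex.I_ne_zero (hn.trans (by ring))
    have hr : -(2 * Real.pi * x) = (n : ℝ) * (2 * Real.pi) := by exact_mod_cast hI
    have h2 : (2 * Real.pi) * x = (2 * Real.pi) * ((-n : ℤ) : ℝ) := by push_cast; linarith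
    have hx' : x = ((-n : ℤ) : ℝ) :=
      mul_left_cancel₀ (by positivity) h2
    exact hx (-n) hx'
  have hsum : ∑ m : Fin M, Complex.exp (-Complex.I * (2 * Real.pi * ((m : ℝ) * x)))
      = (z ^ M - 1) / (z - 1) :=
    calc ∑ m : Fin M, Complex.exp (-Complex.I * (2 * Real.pi * ((m : ℝ) * x)))
        = ∑ m : Fin M, z ^ (m : ℕ) := Finset.sum_congr rfl fun m _ => hterm m
      _ = ∑ i ∈ range M, z ^ i := Fin.sum_univ_eq_sum_range (fun i => z ^ i) M
      _ = (z ^ M - 1) / (z - 1) := geom_sum_eq hz1 M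
  have hzM : z ^ M = Complex.exp ((-(2 * Real.pi * (M * x)) : ℝ) * Complex.I) := by
    rw [hz, ← Complex.exp_nat_mul]
    congr 1
    push_cast
    ring
  rw [hsum, norm_div, hzM]
  rw [abs_exp_I_sub_one, show z - 1 = Complex.exp ((-(2 * Real.pi * (1 * x)) : ℝ) * Complex.I) - 1 by rw [hz]; norm_num,
    abs_exp_I_sub_one]
  rw [abs_div]
  have e1 : -(2 * Real.pi * ((M:ℝ) * x)) / 2 = -((M:ℝ) * Real.pi * x) := by ring
  have e2 : -(2 * Real.pi * (1 * x)) / 2 = -(Real.pi * x) := by ring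
  rw [e1, e2, Real.sin_neg, Real.sin_neg, abs_neg, abs_neg]
  rw [mul_div_mul_left _ _ (two_ne_zero)]

lemma emb_fiber_card (K M : ℕ) (k : Fin K) (m m' : Fin M) :
    (univ.filter (fun e : Fin K ↪ Fin M => e k = m)).card =
    (univ.filter (fun e : Fin K ↪ Fin M => e k = m')).card := by
  apply Finset.card_nbij' (i := fun e => e.trans (Equiv.swap m m').toEmbedding)
    (j := fun e => e.trans (Equiv.swap m m').toEmbedding)
  · intro e he
    simp only [mem_coe, mem_filter, mem_univ, true_and] at he ⊢
    simp [Function.Embedding.trans_apply, he]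
  · intro e he
    simp only [mem_coe, mem_filter, mem_univ, true_and] at he ⊢
    simp [Function.Embedding.trans_apply, he]
  · intro e _
    ext j
    simp [Function.Embedding.trans_apply]
  · intro e _
    ext j
    simp [Function.Embedding.trans_apply]

lemma emb_sum_eq {K M : ℕ} (hM : 0 < M) (k : Fin K) (f : Fin M → ℂ) :
    ∑ e : Fin K ↪ Fin M, f (e k) =
      ((Fintype.card (Fin K ↪ Fin M) : ℂ) / (M : ℂ)) * ∑ m : Fin M, f m := by
  classical
  set c : ℕ := (univ.filter (fun e : Fin K ↪ Fin M => e k = (⟨0, hM⟩ : Fin M))).card with hc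
  have hfib : ∀ m : Fin M, (univ.filter (fun e : Fin K ↪ Fin M => e k = m)).card = c :=
    fun m => emb_fiber_card K M k m _
  have hcard : Fintype.card (Fin K ↪ Fin M) = M * c := by
    rw [Fintype.card, Finset.card_eq_sum_card_fiberwise
      (f := fun e : Fin K ↪ Fin M => e k) (t := univ) (fun x _ => mem_univ _)]
    simp [hfib, Finset.sum_const, Finset.card_univ]
  have hsplit : ∑ e : Fin K ↪ Fin M, f (e k)
      = ∑ m : Fin M, ∑ e ∈ univ.filter (fun e : Fin K ↪ Fin M => e k = m), f (e k) :=
    (Finset.sum_fiberwise_of_maps_to (fun x _ => mem_univ _) _).symm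
  rw [hsplit]
  have : ∀ m : Fin M, ∑ e ∈ univ.filter (fun e : Fin K ↪ Fin M => e k = m), f (e k)
      = (c : ℂ) * f m := by
    intro m
    rw [Finset.sum_congr rfl (fun e he => by
      rw [(Finset.mem_filter.mp he).2]), Finset.sum_const, hfib m, nsmul_eq_mul]
  rw [Finset.sum_congr rfl (fun m _ => this m), ← Finset.mul_sum, hcard]
  have hM' : (M : ℂ) ≠ 0 := Nat.cast_ne_zero.mpr hM.ne'
  push_cast
  field_simp

lemma sum_fun_eval {N : ℕ} {E : Type*} [Fintype E] (n : Fin N) (F : E → ℂ) :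
    ∑ g : Fin N → E, F (g n) =
      ((Fintype.card E : ℂ) ^ (N - 1)) * ∑ e : E, F e := by
  classical
  rw [← Equiv.sum_comp (Equiv.funSplitAt n E).symm (fun g => F (g n))]
  have : ∀ p : E × ({ j // j ≠ n } → E), ((Equiv.funSplitAt n E).symm p) n = p.1 := by
    intro p
    simp [Equiv.funSplitAt]
  rw [Fintype.sum_prod_type]
  simp only [this]
  rw [Finset.sum_congr rfl (fun e _ => Finset.sum_const _)]
  have hcard : Fintype.card ({ j // j ≠ n } → E) = Fintype.card E ^ (N - 1) := by
    rw [Fintype.card_fun]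
    congr 1
    rw [Fintype.card_subtype_compl]
    simp [Fintype.card_subtype_eq]
  simp only [Finset.card_univ, hcard, nsmul_eq_mul, Nat.cast_pow]
  rw [← Finset.mul_sum]

theorem stmt_4 (N K M P Qr : ℕ) (hN : 0 < N) (hK : 0 < K) (hM : 0 < M)
    (hP : 0 < P) (hQr : 0 < Qr) (hKM : K ≤ M) (hKP : K ≤ P)
    (fr fv fθ : ℝ) (hfr : ∀ n : ℤ, fr ≠ n) (hfv : ∀ n : ℤ, fv ≠ n)
    (hfθ : ∀ n : ℤ, fθ ≠ n) :
    ‖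
        (((Fintype.card (Fin N → (Fin K ↪ Fin M) × (Fin K ↪ Fin P)) : ℕ) : ℂ)⁻¹ *
          ∑ sel : Fin N → (Fin K ↪ Fin M) × (Fin K ↪ Fin P),
            chi N K M P Qr sel fr fv fθ)‖ =
      (K : ℝ) / ((M : ℝ) * P) *
        |Real.sin (M * Real.pi * fr) / Real.sin (Real.pi * fr)| *
        |Real.sin (N * Real.pi * fv) / Real.sin (Real.pi * fv)| *
        |Real.sin ((P * Qr : ℕ) * Real.pi * fθ) / Real.sin (Real.pi * fθ)| := by
  classical
  set A : Fin M → ℂ := fun m => Complex.exp (-Complex.I * (2 * Real.pi * ((m : ℝ) * fr))) with hA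
  set B : Fin P → ℂ := fun p =>
    Complex.exp (-Complex.I * (2 * Real.pi * ((Qr : ℝ) * ((p : ℕ) : ℝ) * fθ))) with hB
  set C : Fin N → ℂ := fun n => Complex.exp (-Complex.I * (2 * Real.pi * ((n : ℝ) * fv))) with hC
  set D : Fin Qr → ℂ := fun q => Complex.exp (-Complex.I * (2 * Real.pi * ((q : ℝ) * fθ))) with hD
  set SA : ℂ := ∑ m : Fin M, A m with hSA
  set SB : ℂ := ∑ p : Fin P, B p with hSB
  set SC : ℂ := ∑ n : Fin N, C n with hSC
  set SD : ℂ := ∑ q : Fin Qr, D q with hSD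
  set cM : ℕ := Fintype.card (Fin K ↪ Fin M) with hcM
  set cP : ℕ := Fintype.card (Fin K ↪ Fin P) with hcP
  have hcMpos : 0 < cM := @Fintype.card_pos _ _ ⟨Fin.castLEEmb hKM⟩
  have hcPpos : 0 < cP := @Fintype.card_pos _ _ ⟨Fin.castLEEmb hKP⟩
  -- per-pulse inner sum over embeddings
  have key : ∀ n : Fin N,
      ∑ e : (Fin K ↪ Fin M) × (Fin K ↪ Fin P), ∑ k : Fin K, ∑ q : Fin Qr,
        Complex.exp (-Complex.I * (2 * Real.pi *
          (((e.1 k : ℕ) : ℝ) * fr + (n : ℝ) * fv +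
            ((Qr : ℝ) * ((e.2 k : ℕ) : ℝ) + (q : ℝ)) * fθ)))
      = (K : ℂ) * (((cM : ℂ) / M) * SA) * (((cP : ℂ) / P) * SB) * (C n * SD) := by
    intro n
    have hpt : ∀ (e : (Fin K ↪ Fin M) × (Fin K ↪ Fin P)) (k : Fin K) (q : Fin Qr),
        Complex.exp (-Complex.I * (2 * Real.pi *
          (((e.1 k : ℕ) : ℝ) * fr + (n : ℝ) * fv +
            ((Qr : ℝ) * ((e.2 k : ℕ) : ℝ) + (q : ℝ)) * fθ)))
        = A (e.1 k) * B (e.2 k) * C n * D q := by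
      intro e k q
      rw [hA, hB, hC, hD]
      simp only
      rw [← Complex.exp_add, ← Complex.exp_add, ← Complex.exp_add]
      congr 1
      push_cast
      ring
    calc ∑ e : (Fin K ↪ Fin M) × (Fin K ↪ Fin P), ∑ k : Fin K, ∑ q : Fin Qr,
          Complex.exp (-Complex.I * (2 * Real.pi *
            (((e.1 k : ℕ) : ℝ) * fr + (n : ℝ) * fv +
              ((Qr : ℝ) * ((e.2 k : ℕ) : ℝ) + (q : ℝ)) * fθ)))
        = ∑ e : (Fin K ↪ Fin M) × (Fin K ↪ Fin P), ∑ k : Fin K,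
            (A (e.1 k) * B (e.2 k)) * (C n * SD) := by
          refine Finset.sum_congr rfl fun e _ => Finset.sum_congr rfl fun k _ => ?_
          calc ∑ q : Fin Qr, Complex.exp (-Complex.I * (2 * Real.pi *
                (((e.1 k : ℕ) : ℝ) * fr + (n : ℝ) * fv +
                  ((Qr : ℝ) * ((e.2 k : ℕ) : ℝ) + (q : ℝ)) * fθ)))
              = ∑ q : Fin Qr, (A (e.1 k) * B (e.2 k) * C n) * D q :=
                Finset.sum_congr rfl fun q _ => hpt e k q
            _ = (A (e.1 k) * B (e.2 k) * C n) * SD := by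
                rw [hSD]; exact (Finset.mul_sum _ _ _).symm
            _ = (A (e.1 k) * B (e.2 k)) * (C n * SD) := by ring
      _ = ∑ k : Fin K, (∑ e : (Fin K ↪ Fin M) × (Fin K ↪ Fin P),
            A (e.1 k) * B (e.2 k)) * (C n * SD) := by
          rw [Finset.sum_comm]
          exact Finset.sum_congr rfl fun k _ => (Finset.sum_mul _ _ _).symm
      _ = ∑ k : Fin K, ((((cM : ℂ) / M) * SA) * (((cP : ℂ) / P) * SB)) * (C n * SD) := by
          refine Finset.sum_congr rfl fun k _ => ?_
          congr 1
          have hprod := Fintype.sum_prod_type (γ := ℂ)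
            (fun e : (Fin K ↪ Fin M) × (Fin K ↪ Fin P) => A (e.1 k) * B (e.2 k))
          rw [hprod]
          simp only
          rw [← Finset.sum_mul_sum, emb_sum_eq hM k A, emb_sum_eq hP k B]
      _ = (K : ℂ) * (((cM : ℂ) / M) * SA) * (((cP : ℂ) / P) * SB) * (C n * SD) := by
          rw [Finset.sum_const, Finset.card_univ, Fintype.card_fin, nsmul_eq_mul]
          ring
  -- total sum over all selections
  have hsum : ∑ sel : Fin N → (Fin K ↪ Fin M) × (Fin K ↪ Fin P),
      chi N K M P Qr sel fr fv fθ
      = (((cM * cP : ℕ) : ℂ) ^ (N - 1) * ((K : ℂ) * (((cM : ℂ) / M) * SA) *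
          (((cP : ℂ) / P) * SB) * SD)) * SC := by
    unfold chi
    rw [Finset.sum_comm]
    have h1 : ∀ n : Fin N,
        (∑ sel : Fin N → (Fin K ↪ Fin M) × (Fin K ↪ Fin P), ∑ k : Fin K, ∑ q : Fin Qr,
          Complex.exp (-Complex.I * (2 * Real.pi *
            ((((sel n).1 k : ℕ) : ℝ) * fr + (n : ℝ) * fv +
              ((Qr : ℝ) * (((sel n).2 k : ℕ) : ℝ) + (q : ℝ)) * fθ))))
        = ((cM * cP : ℕ) : ℂ) ^ (N - 1) *
            ((K : ℂ) * (((cM : ℂ) / M) * SA) * (((cP : ℂ) / P) * SB) * (C n * SD)) := by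
      intro n
      have := sum_fun_eval (E := (Fin K ↪ Fin M) × (Fin K ↪ Fin P)) n
        (fun e => ∑ k : Fin K, ∑ q : Fin Qr,
          Complex.exp (-Complex.I * (2 * Real.pi *
            (((e.1 k : ℕ) : ℝ) * fr + (n : ℝ) * fv +
              ((Qr : ℝ) * ((e.2 k : ℕ) : ℝ) + (q : ℝ)) * fθ))))
      rw [this, key n, Fintype.card_prod, ← hcM, ← hcP]
    rw [Finset.sum_congr rfl fun n _ => h1 n]
    have h2 : ∀ n : Fin N,
        ((cM * cP : ℕ) : ℂ) ^ (N - 1) *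
          ((K : ℂ) * (((cM : ℂ) / M) * SA) * (((cP : ℂ) / P) * SB) * (C n * SD))
        = (((cM * cP : ℕ) : ℂ) ^ (N - 1) * ((K : ℂ) * (((cM : ℂ) / M) * SA) *
            (((cP : ℂ) / P) * SB) * SD)) * C n := fun n => by ring
    rw [Finset.sum_congr rfl fun n _ => h2 n, hSC]
    exact (Finset.mul_sum _ _ _).symm
  -- combine the P and Qr geometric sums into one over Fin (P * Qr)
  have hBD : SB * SD = ∑ j : Fin (P * Qr),
      Complex.exp (-Complex.I * (2 * Real.pi * ((j : ℝ) * fθ))) := by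
    rw [hSB, hSD, Finset.sum_mul_sum]
    have hprod := Fintype.sum_prod_type (γ := ℂ) (fun x : Fin P × Fin Qr => B x.1 * D x.2)
    rw [← hprod]
    apply Fintype.sum_equiv finProdFinEquiv
    intro x
    rw [hB, hD]
    simp only
    rw [← Complex.exp_add]
    congr 1
    have hv : ((finProdFinEquiv x : Fin (P * Qr)) : ℝ) = (x.2 : ℝ) + (Qr : ℝ) * (x.1 : ℝ) := by
      have := finProdFinEquiv_apply_val x
      push_cast [this]
      ring
    rw [hv]
    push_cast
    ring
  -- total cardinality
  have hcardall : ((Fintype.card (Fin N → (Fin K ↪ Fin M) × (Fin K ↪ Fin P)) : ℕ) : ℂ)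
      = ((cM * cP : ℕ) : ℂ) ^ N := by
    rw [Fintype.card_fun, Fintype.card_prod, ← hcM, ← hcP, Fintype.card_fin]
    push_cast
    ring
  have hx0 : ((cM * cP : ℕ) : ℂ) ≠ 0 := by
    push_cast
    exact mul_ne_zero (Nat.cast_ne_zero.mpr hcMpos.ne') (Nat.cast_ne_zero.mpr hcPpos.ne')
  have hpow : ((cM * cP : ℕ) : ℂ) ^ N = ((cM * cP : ℕ) : ℂ) ^ (N - 1) * ((cM * cP : ℕ) : ℂ) := by
    conv_lhs => rw [← Nat.succ_pred_eq_of_pos hN]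
    rw [pow_succ]
    rfl
  have hM0 : (M : ℂ) ≠ 0 := Nat.cast_ne_zero.mpr hM.ne'
  have hP0 : (P : ℂ) ≠ 0 := Nat.cast_ne_zero.mpr hP.ne'
  have hxp0 : ((cM * cP : ℕ) : ℂ) ^ (N - 1) ≠ 0 := pow_ne_zero _ hx0
  have hcMcP : ((cM * cP : ℕ) : ℂ) = (cM : ℂ) * (cP : ℂ) := by push_cast; ring
  have hfinal : ((Fintype.card (Fin N → (Fin K ↪ Fin M) × (Fin K ↪ Fin P)) : ℕ) : ℂ)⁻¹ *
      ∑ sel : Fin N → (Fin K ↪ Fin M) × (Fin K ↪ Fin P), chi N K M P Qr sel fr fv fθ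
      = ((K : ℂ) / ((M : ℂ) * (P : ℂ))) * (SA * SC * (SB * SD)) := by
    rw [hsum, hcardall, hpow, hcMcP]
    have hcM0 : (cM : ℂ) ≠ 0 := Nat.cast_ne_zero.mpr hcMpos.ne'
    have hcP0 : (cP : ℂ) ≠ 0 := Nat.cast_ne_zero.mpr hcPpos.ne'
    rw [hcMcP] at hxp0
    field_simp
  rw [hfinal, hBD, norm_mul, norm_mul, norm_mul]
  have habs0 : ‖(K : ℂ) / ((M : ℂ) * (P : ℂ))‖ = (K : ℝ) / ((M : ℝ) * P) := by
    rw [norm_div, norm_mul, Complex.norm_natCast, Complex.norm_natCast, Complex.norm_natCast]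
  have habsA : ‖SA‖ = |Real.sin (M * Real.pi * fr) / Real.sin (Real.pi * fr)| := by
    rw [hSA]; simp only [hA]; exact geo_abs M fr hfr
  have habsC : ‖SC‖ = |Real.sin (N * Real.pi * fv) / Real.sin (Real.pi * fv)| := by
    rw [hSC]; simp only [hC]; exact geo_abs N fv hfv
  have habsBD : ‖∑ j : Fin (P * Qr),
      Complex.exp (-Complex.I * (2 * Real.pi * ((j : ℝ) * fθ)))‖
      = |Real.sin ((P * Qr : ℕ) * Real.pi * fθ) / Real.sin (Real.pi * fθ)| :=
    geo_abs (P * Qr) fθ hfθ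
  rw [habs0, habsA, habsC, habsBD]
  ring
end

section
/- The expected ambiguity function E{χ(δf_r, δf_v, δf_θ)} equals (K/(MP)) · e^{-jπ((M-1)δf_r + (N-1)δf_v + (PQ_r-1)δf_θ)} · [sin(Mπδf_r)/sin(πδf_r)] · [sin(Nπδf_v)/sin(πδf_v)] · [sin(PQ_rπδf_θ)/sin(πδf_θ)] for non-integer arguments. -/
open Finset

lemma sin_pi_ne (f : ℝ) (hf : ∀ n : ℤ, f ≠ n) : Real.sin (Real.pi * f) ≠ 0 := by
  intro h
  rw [Real.sin_eq_zero_iff] at h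
  obtain ⟨n, hn⟩ := h
  apply hf n
  have h2 : Real.pi * f = Real.pi * (n : ℝ) := by linear_combination -hn
  exact mul_left_cancel₀ Real.pi_ne_zero h2


lemma exp_two_sub_one (w : ℝ) :
    Complex.exp (-Complex.I * (2 * w)) - 1 =
      Complex.exp (-Complex.I * w) * (-2 * Complex.I * Complex.sin w) := by
  have h1 : Complex.exp (-Complex.I * w) * Complex.exp (Complex.I * w) = 1 := by
    rw [← Complex.exp_add]; norm_num [Complex.exp_zero]
  rw [Complex.sin, show (-(w:ℂ)) * Complex.I = -Complex.I * w by ring,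
    show ((w : ℂ) * Complex.I) = Complex.I * w by ring,
    show (-Complex.I * (2 * (w:ℂ))) = -Complex.I * w + -Complex.I * w by ring,
    Complex.exp_add]
  linear_combination (Complex.exp (-Complex.I * w) *
    (Complex.exp (-Complex.I * w) - Complex.exp (Complex.I * w))) * Complex.I_sq + h1

lemma geom_exp (L : ℕ) (f : ℝ) (hf : Real.sin (Real.pi * f) ≠ 0) :
    ∑ j ∈ Finset.range L, Complex.exp (-Complex.I * (2 * Real.pi * (j * f))) =
      Complex.exp (-Complex.I * (Real.pi * ((L - 1) * f))) *
        ((Real.sin (L * Real.pi * f) / Real.sin (Real.pi * f) : ℝ) : ℂ) := by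
  have hs : (Real.sin (Real.pi * f) : ℂ) ≠ 0 := by exact_mod_cast hf
  have hterm : ∀ j : ℕ, Complex.exp (-Complex.I * (2 * Real.pi * (j * f)))
      = Complex.exp (-Complex.I * (2 * (Real.pi * f))) ^ j := by
    intro j
    rw [← Complex.exp_nat_mul]
    congr 1; push_cast; ring
  have hz1 : Complex.exp (-Complex.I * (2 * (Real.pi * f))) ≠ 1 := by
    intro h
    rw [Complex.exp_eq_one_iff] at h
    obtain ⟨n, hn⟩ := h
    have hπ : (Real.pi : ℂ) ≠ 0 := by exact_mod_cast Real.pi_ne_zero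
    have h2 : (2 * (Real.pi:ℂ)) * f = (2 * (Real.pi:ℂ)) * (-n : ℤ) := by
      push_cast
      linear_combination Complex.I * hn + (2*(Real.pi:ℂ)*(f:ℂ) + 2*(Real.pi:ℂ)*(n:ℂ)) * Complex.I_sq
    have h3 : (f : ℂ) = ((-n : ℤ) : ℝ) := by
      have h4 := mul_left_cancel₀ (mul_ne_zero (two_ne_zero) hπ) h2
      push_cast at h4 ⊢; exact h4
    have hfn : f = ((-n : ℤ) : ℝ) := by exact_mod_cast h3
    apply hf
    rw [Real.sin_eq_zero_iff]
    exact ⟨-n, by rw [hfn]; push_cast; ring⟩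
  rw [Finset.sum_congr rfl fun j _ => hterm j, geom_sum_eq hz1]
  have hzL : Complex.exp (-Complex.I * (2 * (Real.pi * f))) ^ L - 1
      = Complex.exp (-Complex.I * ((L:ℝ) * Real.pi * f)) *
          (-2 * Complex.I * (Real.sin ((L:ℝ) * Real.pi * f) : ℂ)) := by
    rw [← Complex.exp_nat_mul,
      show ((L:ℂ)) * (-Complex.I * (2 * ((Real.pi:ℂ) * f))) =
        -Complex.I * (2 * (((L:ℝ) * Real.pi * f : ℝ) : ℂ)) by push_cast; ring,
      exp_two_sub_one, ← Complex.ofReal_sin]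
    congr 2
    push_cast; ring
  have hz1' : Complex.exp (-Complex.I * (2 * (Real.pi * f))) - 1
      = Complex.exp (-Complex.I * ((Real.pi:ℝ) * f)) *
          (-2 * Complex.I * (Real.sin (Real.pi * f) : ℂ)) := by
    rw [show (-Complex.I * (2 * ((Real.pi:ℂ) * f))) =
      -Complex.I * (2 * ((Real.pi * f : ℝ) : ℂ)) by push_cast; ring,
      exp_two_sub_one, ← Complex.ofReal_sin]
    congr 2
    push_cast; ring
  rw [hzL, hz1']
  have hden : Complex.exp (-Complex.I * ((Real.pi:ℝ) * f)) *
      (-2 * Complex.I * (Real.sin (Real.pi * f) : ℂ)) ≠ 0 := by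
    apply mul_ne_zero (Complex.exp_ne_zero _)
    apply mul_ne_zero _ hs
    simp [Complex.I_ne_zero]
  rw [div_eq_iff hden]
  have hAB : Complex.exp (-Complex.I * (Real.pi * ((L - 1) * f))) *
      Complex.exp (-Complex.I * ((Real.pi:ℝ) * f)) =
      Complex.exp (-Complex.I * ((L:ℝ) * Real.pi * f)) := by
    rw [← Complex.exp_add]; congr 1; push_cast; ring
  rw [Complex.ofReal_div, ← hAB]
  have hs' : Complex.sin ((Real.pi:ℂ) * f) ≠ 0 := by
    have h5 : ((Real.pi:ℂ) * f) = ((Real.pi * f : ℝ):ℂ) := by push_cast; ring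
    rw [h5, ← Complex.ofReal_sin]; exact_mod_cast hf
  push_cast
  field_simp


lemma fiber_card_eq {α β : Type*} [Fintype α] [DecidableEq β]
    (π : α → β) (E : α ≃ α) (e : β ≃ β) (hc : ∀ a, π (E a) = e (π a)) (b : β) :
    (univ.filter (fun a => π a = b)).card = (univ.filter (fun a => π a = e b)).card := by
  apply Finset.card_bij (fun a _ => E a)
  · intro a ha
    simp only [mem_filter, mem_univ, true_and] at *
    rw [hc, ha]
  · intro a _ a' _ h
    exact E.injective h
  · intro a' ha'
    simp only [mem_filter, mem_univ, true_and] at *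
    refine ⟨E.symm a', ?_, E.apply_symm_apply a'⟩
    have h2 := hc (E.symm a')
    rw [E.apply_symm_apply, ha'] at h2
    exact e.injective h2.symm

lemma sum_eval {α β : Type*} [Fintype α] [Fintype β] [DecidableEq β] [Nonempty β]
    (π : α → β)
    (hsw : ∀ b b' : β, ∃ E : α ≃ α, ∀ a, π (E a) = Equiv.swap b b' (π a))
    (f : β → ℂ) :
    ∑ a : α, f (π a) = ((Fintype.card α : ℂ) / (Fintype.card β)) * ∑ b : β, f b := by
  obtain ⟨b0⟩ := ‹Nonempty β›
  have hfib : ∀ b : β, (univ.filter (fun a : α => π a = b)).card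
      = (univ.filter (fun a : α => π a = b0)).card := by
    intro b
    obtain ⟨E, hE⟩ := hsw b b0
    have h := fiber_card_eq π E (Equiv.swap b b0) hE b
    rwa [Equiv.swap_apply_left] at h
  set c := (univ.filter (fun a : α => π a = b0)).card with hc
  have hsum : ∑ a : α, f (π a) = (c : ℂ) * ∑ b : β, f b := by
    rw [← Finset.sum_fiberwise univ π (fun a => f (π a)), Finset.mul_sum]
    refine Finset.sum_congr rfl fun b _ => ?_
    rw [Finset.sum_congr rfl (fun a ha => by rw [(Finset.mem_filter.mp ha).2]),
      Finset.sum_const, hfib b, nsmul_eq_mul]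
  have hcard : (Fintype.card α : ℂ) = (Fintype.card β : ℂ) * c := by
    have h := Finset.card_eq_sum_card_fiberwise
      (f := π) (s := univ) (t := univ) (fun a _ => Finset.mem_univ (π a))
    rw [Finset.sum_congr rfl (fun b _ => hfib b), Finset.sum_const, smul_eq_mul] at h
    rw [← Finset.card_univ]
    exact_mod_cast congrArg (Nat.cast : ℕ → ℂ) h
  have hβ : (Fintype.card β : ℂ) ≠ 0 := Nat.cast_ne_zero.mpr Fintype.card_ne_zero
  rw [hsum, hcard]
  field_simp

lemma sum_eval_fun {γ : Type*} [Fintype γ] [DecidableEq γ] [Nonempty γ] (N : ℕ) (n : Fin N)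
    (f : γ → ℂ) :
    ∑ g : Fin N → γ, f (g n) =
      ((Fintype.card (Fin N → γ) : ℂ) / (Fintype.card γ)) * ∑ b : γ, f b := by
  apply sum_eval
  intro b b'
  exact ⟨Equiv.arrowCongr (Equiv.refl (Fin N)) (Equiv.swap b b'), fun g => rfl⟩

lemma sum_eval_emb (K M : ℕ) (hM : 0 < M) (k : Fin K) (f : Fin M → ℂ) :
    ∑ e : Fin K ↪ Fin M, f (e k) =
      ((Fintype.card (Fin K ↪ Fin M) : ℂ) / (M : ℂ)) * ∑ m : Fin M, f m := by
  haveI : Nonempty (Fin M) := ⟨⟨0, hM⟩⟩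
  have h := sum_eval (α := Fin K ↪ Fin M) (β := Fin M) (fun e => e k) ?_ f
  · rw [h, Fintype.card_fin]
  · intro b b'
    refine ⟨Equiv.embeddingCongr (Equiv.refl (Fin K)) (Equiv.swap b b'), fun e => ?_⟩
    simp [Equiv.embeddingCongr]

theorem stmt_5 (N K M P Qr : ℕ) (hN : 0 < N) (hK : 0 < K) (hM : 0 < M)
    (hP : 0 < P) (hQr : 0 < Qr) (hKM : K ≤ M) (hKP : K ≤ P)
    (fr fv fθ : ℝ) (hfr : ∀ n : ℤ, fr ≠ n) (hfv : ∀ n : ℤ, fv ≠ n)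
    (hfθ : ∀ n : ℤ, fθ ≠ n) :
    ((Fintype.card (Fin N → (Fin K ↪ Fin M) × (Fin K ↪ Fin P)) : ℕ) : ℂ)⁻¹ *
        (∑ sel : Fin N → (Fin K ↪ Fin M) × (Fin K ↪ Fin P),
          chi N K M P Qr sel fr fv fθ) =
      ((K : ℂ) / ((M : ℂ) * P)) *
        Complex.exp (-Complex.I * (Real.pi *
          (((M : ℝ) - 1) * fr + ((N : ℝ) - 1) * fv + (((P * Qr : ℕ) : ℝ) - 1) * fθ))) *
        ((Real.sin (M * Real.pi * fr) / Real.sin (Real.pi * fr) : ℝ) : ℂ) *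
        ((Real.sin (N * Real.pi * fv) / Real.sin (Real.pi * fv) : ℝ) : ℂ) *
        ((Real.sin ((P * Qr : ℕ) * Real.pi * fθ) / Real.sin (Real.pi * fθ) : ℝ) : ℂ) := by
  classical
  haveI hne1 : Nonempty (Fin K ↪ Fin M) := by
    rw [Function.Embedding.nonempty_iff_card_le]; simpa using hKM
  haveI hne2 : Nonempty (Fin K ↪ Fin P) := by
    rw [Function.Embedding.nonempty_iff_card_le]; simpa using hKP
  set A : ℕ → ℂ := fun j => Complex.exp (-Complex.I * (2 * Real.pi * (j * fr))) with hA
  set B : ℕ → ℂ := fun j => Complex.exp (-Complex.I * (2 * Real.pi * (j * fv))) with hB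
  set Cθ : ℕ → ℂ := fun j => Complex.exp (-Complex.I * (2 * Real.pi * (j * fθ))) with hCθ
  have hsinr := sin_pi_ne fr hfr
  have hsinv := sin_pi_ne fv hfv
  have hsinθ := sin_pi_ne fθ hfθ
  have hfac : ∀ (m : Fin M) (p : Fin P) (n : Fin N) (q : Fin Qr),
      Complex.exp (-Complex.I * (2 * Real.pi *
        (((m : ℕ) : ℝ) * fr + (n : ℝ) * fv + ((Qr : ℝ) * (((p : ℕ)) : ℝ) + (q : ℝ)) * fθ)))
      = (A m * Cθ (Qr * p)) * (B n * Cθ q) := by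
    intro m p n q
    simp only [hA, hB, hCθ]
    rw [← Complex.exp_add, ← Complex.exp_add, ← Complex.exp_add]
    congr 1
    push_cast
    ring
  have hinner : ∀ (n : Fin N) (k : Fin K),
      (∑ sel : Fin N → (Fin K ↪ Fin M) × (Fin K ↪ Fin P),
        A ((sel n).1 k) * Cθ (Qr * ((sel n).2 k))) =
      ((Fintype.card (Fin N → (Fin K ↪ Fin M) × (Fin K ↪ Fin P)) : ℂ) /
        ((Fintype.card (Fin K ↪ Fin M) : ℂ) * (Fintype.card (Fin K ↪ Fin P) : ℂ))) *
        (((Fintype.card (Fin K ↪ Fin M) : ℂ) / M * ∑ m : Fin M, A m) *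
         ((Fintype.card (Fin K ↪ Fin P) : ℂ) / P * ∑ p : Fin P, Cθ (Qr * p))) := by
    intro n k
    rw [sum_eval_fun N n
      (fun s : (Fin K ↪ Fin M) × (Fin K ↪ Fin P) => A (s.1 k) * Cθ (Qr * (s.2 k)))]
    rw [Fintype.card_prod, Fintype.sum_prod_type]
    rw [show (∑ e1 : Fin K ↪ Fin M, ∑ e2 : Fin K ↪ Fin P, A (e1 k) * Cθ (Qr * (e2 k)))
        = (∑ e1 : Fin K ↪ Fin M, A (e1 k)) * (∑ e2 : Fin K ↪ Fin P, Cθ (Qr * (e2 k))) from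
      (Finset.sum_mul_sum _ _ _ _).symm]
    rw [sum_eval_emb K M hM k (fun m => A m), sum_eval_emb K P hP k (fun p => Cθ (Qr * p))]
    push_cast
    ring
  have hswap : (∑ sel : Fin N → (Fin K ↪ Fin M) × (Fin K ↪ Fin P),
      chi N K M P Qr sel fr fv fθ)
      = ∑ n : Fin N, ∑ k : Fin K, ∑ q : Fin Qr,
          ∑ sel : Fin N → (Fin K ↪ Fin M) × (Fin K ↪ Fin P),
          ((A ((sel n).1 k) * Cθ (Qr * ((sel n).2 k))) * (B n * Cθ q)) := by
    unfold chi
    rw [Finset.sum_comm]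
    refine Finset.sum_congr rfl fun n _ => ?_
    rw [Finset.sum_comm]
    refine Finset.sum_congr rfl fun k _ => ?_
    rw [Finset.sum_comm]
    refine Finset.sum_congr rfl fun q _ => ?_
    exact Finset.sum_congr rfl fun sel _ => hfac _ _ _ _
  set c0 : ℂ :=
      ((Fintype.card (Fin N → (Fin K ↪ Fin M) × (Fin K ↪ Fin P)) : ℂ) /
        ((Fintype.card (Fin K ↪ Fin M) : ℂ) * (Fintype.card (Fin K ↪ Fin P) : ℂ))) *
        (((Fintype.card (Fin K ↪ Fin M) : ℂ) / M * ∑ m : Fin M, A m) *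
         ((Fintype.card (Fin K ↪ Fin P) : ℂ) / P * ∑ p : Fin P, Cθ (Qr * p))) with hc0
  have hstep : ∀ (n : Fin N) (k : Fin K) (q : Fin Qr),
      (∑ sel : Fin N → (Fin K ↪ Fin M) × (Fin K ↪ Fin P),
        ((A ((sel n).1 k) * Cθ (Qr * ((sel n).2 k))) * (B n * Cθ q)))
      = c0 * (B n * Cθ q) := by
    intro n k q
    rw [← Finset.sum_mul, hinner n k]
  have hcollect : (∑ n : Fin N, ∑ _k : Fin K, ∑ q : Fin Qr, c0 * (B n * Cθ q))
      = (K : ℂ) * c0 * (∑ n : Fin N, B n) * (∑ q : Fin Qr, Cθ q) := by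
    have e1 : ∀ n : Fin N, (∑ _k : Fin K, ∑ q : Fin Qr, c0 * (B n * Cθ q))
        = (K : ℂ) * (c0 * B n * (∑ q : Fin Qr, Cθ q)) := by
      intro n
      have e2 : (∑ q : Fin Qr, c0 * (B n * Cθ q)) = c0 * B n * (∑ q : Fin Qr, Cθ q) := by
        rw [Finset.mul_sum]
        exact Finset.sum_congr rfl fun q _ => by ring
      simp only [e2, Finset.sum_const, Finset.card_univ, Fintype.card_fin, nsmul_eq_mul]
    simp only [e1]
    rw [← Finset.mul_sum, Finset.mul_sum]
    rw [Finset.sum_congr rfl (fun n _ => by ring :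
      ∀ n ∈ (univ : Finset (Fin N)), (K:ℂ) * (c0 * B n * (∑ q : Fin Qr, Cθ q))
        = ((K:ℂ) * c0 * (∑ q : Fin Qr, Cθ q)) * B n), ← Finset.mul_sum]
    ring
  -- θ sums combine
  have hθ : (∑ p : Fin P, Cθ (Qr * ↑p)) * (∑ q : Fin Qr, Cθ ↑q)
      = ∑ j ∈ Finset.range (P * Qr), Cθ j := by
    rw [Finset.sum_mul_sum,
      ← Fintype.sum_prod_type (f := fun x : Fin P × Fin Qr => Cθ (Qr * ↑x.1) * Cθ ↑x.2),
      ← Fin.sum_univ_eq_sum_range Cθ (P * Qr)]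
    apply Fintype.sum_equiv finProdFinEquiv
    intro x
    simp only [hCθ, finProdFinEquiv_apply_val]
    rw [← Complex.exp_add]
    congr 1
    push_cast
    ring
  -- nonzero facts
  have hcF : ((Fintype.card (Fin N → (Fin K ↪ Fin M) × (Fin K ↪ Fin P)) : ℕ) : ℂ) ≠ 0 :=
    Nat.cast_ne_zero.mpr Fintype.card_ne_zero
  have hcEM : ((Fintype.card (Fin K ↪ Fin M) : ℕ) : ℂ) ≠ 0 :=
    Nat.cast_ne_zero.mpr Fintype.card_ne_zero
  have hcEP : ((Fintype.card (Fin K ↪ Fin P) : ℕ) : ℂ) ≠ 0 :=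
    Nat.cast_ne_zero.mpr Fintype.card_ne_zero
  have hM' : (M : ℂ) ≠ 0 := Nat.cast_ne_zero.mpr hM.ne'
  have hP' : (P : ℂ) ≠ 0 := Nat.cast_ne_zero.mpr hP.ne'
  -- assemble
  rw [hswap]
  simp only [hstep]
  rw [hcollect, hc0]
  have hmain : ((Fintype.card (Fin N → (Fin K ↪ Fin M) × (Fin K ↪ Fin P)) : ℕ) : ℂ)⁻¹ *
      ((K : ℂ) *
        (((Fintype.card (Fin N → (Fin K ↪ Fin M) × (Fin K ↪ Fin P)) : ℂ) /
          ((Fintype.card (Fin K ↪ Fin M) : ℂ) * (Fintype.card (Fin K ↪ Fin P) : ℂ))) *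
          (((Fintype.card (Fin K ↪ Fin M) : ℂ) / M * ∑ m : Fin M, A m) *
           ((Fintype.card (Fin K ↪ Fin P) : ℂ) / P * ∑ p : Fin P, Cθ (Qr * p)))) *
        (∑ n : Fin N, B n) * (∑ q : Fin Qr, Cθ q))
      = ((K : ℂ) / ((M : ℂ) * P)) * (∑ m : Fin M, A m) * (∑ n : Fin N, B n) *
          ((∑ p : Fin P, Cθ (Qr * ↑p)) * (∑ q : Fin Qr, Cθ ↑q)) := by
    have hdM : ((M.descFactorial K : ℕ) : ℂ) ≠ 0 := by
      rw [Nat.cast_ne_zero, Ne, Nat.descFactorial_eq_zero_iff_lt]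
      omega
    have hdP : ((P.descFactorial K : ℕ) : ℂ) ≠ 0 := by
      rw [Nat.cast_ne_zero, Ne, Nat.descFactorial_eq_zero_iff_lt]
      omega
    simp only [Fintype.card_fun, Fintype.card_prod, Fintype.card_embedding_eq,
      Fintype.card_fin]
    field_simp
  rw [hmain, hθ]
  have hSA : (∑ m : Fin M, A ↑m)
      = Complex.exp (-Complex.I * (Real.pi * ((M - 1) * fr))) *
          ((Real.sin (M * Real.pi * fr) / Real.sin (Real.pi * fr) : ℝ) : ℂ) := by
    rw [Fin.sum_univ_eq_sum_range A M]
    simp only [hA]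
    exact geom_exp M fr hsinr
  have hSB : (∑ n : Fin N, B ↑n)
      = Complex.exp (-Complex.I * (Real.pi * ((N - 1) * fv))) *
          ((Real.sin (N * Real.pi * fv) / Real.sin (Real.pi * fv) : ℝ) : ℂ) := by
    rw [Fin.sum_univ_eq_sum_range B N]
    simp only [hB]
    exact geom_exp N fv hsinv
  have hSPQ : (∑ j ∈ Finset.range (P * Qr), Cθ j)
      = Complex.exp (-Complex.I * (Real.pi * (((P * Qr : ℕ) : ℝ) - 1) * fθ)) *
          ((Real.sin (((P * Qr : ℕ) : ℝ) * Real.pi * fθ) / Real.sin (Real.pi * fθ) : ℝ) : ℂ) := by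
    simp only [hCθ]
    rw [geom_exp (P * Qr) fθ hsinθ]
    congr 2
    push_cast
    ring
  rw [hSA, hSB, hSPQ]
  have hexp : Complex.exp (-Complex.I * (Real.pi * ((M - 1) * fr))) *
      Complex.exp (-Complex.I * (Real.pi * ((N - 1) * fv))) *
      Complex.exp (-Complex.I * (Real.pi * (((P * Qr : ℕ) : ℝ) - 1) * fθ))
      = Complex.exp (-Complex.I * (Real.pi *
          (((M : ℝ) - 1) * fr + ((N : ℝ) - 1) * fv + (((P * Qr : ℕ) : ℝ) - 1) * fθ))) := by
    rw [← Complex.exp_add, ← Complex.exp_add]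
    congr 1
    push_cast
    ring
  rw [← hexp]
  ring
end
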